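/- arXiv:1901.06872 — 3 statements merged into one kernel-verified Lean document; each statement's English description precedes it below -/
import Mathlib

section
/- Let m ≥ 2 be an integer and let α be a real number with α ≥ (2·m^{3/2} + 3m − 1)/(m−1)^2. Then Q_{m,α}(t) ≥ 0 for all real t ≥ 0. -/
/-- For an integer `m ≥ 2` and a real `α ≥ (2 m^{3/2} + 3m − 1)/(m−1)²`, the cubic
`Q_{m,α}(t) = (m−1)⁴ t³ − 3(m−1)² α t² − 3(m−1) α² t + α⁴` is nonnegative for all `t ≥ 0`. -/
theorem Q_nonneg (m : ℕ) (hm : 2 ≤ m) (α : ℝ)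
    (hα : α ≥ (2 * (m : ℝ) ^ ((3 : ℝ) / 2) + 3 * (m : ℝ) - 1) / ((m : ℝ) - 1) ^ 2) :
    ∀ t : ℝ, 0 ≤ t →
      ((m : ℝ) - 1) ^ 4 * t ^ 3 - 3 * ((m : ℝ) - 1) ^ 2 * α * t ^ 2
        - 3 * ((m : ℝ) - 1) * α ^ 2 * t + α ^ 4 ≥ 0 := by
  intro t ht
  have hm0 : (0:ℝ) ≤ (m:ℝ) := by positivity
  set s : ℝ := Real.sqrt m with hs
  have hs2 : s ^ 2 = (m:ℝ) := Real.sq_sqrt hm0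
  have hm2 : (2:ℝ) ≤ (m:ℝ) := by exact_mod_cast hm
  have hs1 : 1 < s := by
    nlinarith [Real.sqrt_nonneg (m:ℝ)]
  have hpow : (m : ℝ) ^ ((3 : ℝ) / 2) = s ^ 3 := by
    rw [show ((3:ℝ)/2) = (1/2) * 3 by norm_num, Real.rpow_mul hm0,
      show ((3:ℝ) = ((3:ℕ):ℝ)) by norm_num, Real.rpow_natCast]
    congr 1
    rw [hs, Real.sqrt_eq_rpow]
  have hden : (0:ℝ) < ((m:ℝ) - 1) ^ 2 := by nlinarith
  have hA : α * (s - 1) ^ 2 ≥ 2 * s - 1 := by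
    have h1 : α * ((m:ℝ) - 1) ^ 2 ≥ 2 * s ^ 3 + 3 * s ^ 2 - 1 := by
      have := (div_le_iff₀ hden).mp hα
      nlinarith [this]
    -- (m-1)^2 = (s-1)^2 (s+1)^2 and 2s^3+3s^2-1 = (2s-1)(s+1)^2
    have hm1 : (m:ℝ) - 1 = (s - 1) * (s + 1) := by nlinarith
    rw [hm1] at h1
    have hsp : (0:ℝ) < (s+1)^2 := by positivity
    have h1' : (2*s - 1) * (s+1)^2 ≤ (α * (s-1)^2) * (s+1)^2 := by nlinarith [h1]
    exact le_of_mul_le_mul_right h1' hsp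
  have hα0 : 0 < α := by nlinarith [sq_nonneg (s-1)]
  have hmm : (m:ℝ) - 1 = s ^ 2 - 1 := by rw [hs2]
  rw [hmm]
  have key : (( s^2 - 1) ^ 4 * t ^ 3 - 3 * (s^2 - 1) ^ 2 * α * t ^ 2
        - 3 * (s^2 - 1) * α ^ 2 * t + α ^ 4) * ((s^2-1)^2 * (s-1)^2)
      = (s-1)^2 * ((s^2-1)^2 * t - α * (s+1))^2 * ((s^2-1)^2 * t + α * (2*s-1))
        + α^3 * (α * (s-1)^2 - (2*s-1)) * (s^2-1)^2 := by ring
  have h1 : 0 ≤ (s-1)^2 * ((s^2-1)^2 * t - α * (s+1))^2 * ((s^2-1)^2 * t + α * (2*s-1)) := by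
    apply mul_nonneg (mul_nonneg (sq_nonneg _) (sq_nonneg _))
    have : 0 < 2*s - 1 := by linarith
    positivity
  have h2 : 0 ≤ α^3 * (α * (s-1)^2 - (2*s-1)) * (s^2-1)^2 := by
    apply mul_nonneg (mul_nonneg (by positivity) (by linarith)) (sq_nonneg _)
  have hpos : 0 < (s^2-1)^2 * (s-1)^2 := by
    have h3 : 0 < s^2 - 1 := by nlinarith
    have h4 : 0 < s - 1 := by linarith
    positivity
  have h := add_nonneg h1 h2
  rw [← key] at h
  exact (mul_nonneg_iff_of_pos_right hpos).mp h
end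

section
/- Let m ≥ 2 be an integer and α > 0 a real number. For every point (x,y) ∈ ℝ^m × ℝ with x ≠ 0 and y > 0, the divergence of the vector field ξ(x,y) = −y^α·∇F_{m,α}(x,y)/|∇F_{m,α}(x,y)| (i.e., the sum of the m+1 partial derivatives of its components) satisfies: div ξ(x,y) = −|∇F_{m,α}(x,y)|^{−3}·(m−1)·α·y^α·( (m−1)^4·y^6 − 3(m−1)^2·α·y^4·|x|^2 − 3(m−1)·α^2·y^2·|x|^4 + α^4·|x|^6 )·( α·|x|^2 − (m−1)·y^2 ). -/
open Filter

/-- The gradient of `F_{m,α}(x,y) = (1/4)(α²|x|⁴ − (m−1)² y⁴)`, namely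
`∇F_{m,α}(x,y) = (α²|x|² x, −(m−1)² y³)`. -/
noncomputable def gradF (m : ℕ) (α : ℝ) (z : EuclideanSpace ℝ (Fin m) × ℝ) :
    EuclideanSpace ℝ (Fin m) × ℝ :=
  ((α ^ 2 * ‖z.1‖ ^ 2) • z.1, -((m : ℝ) - 1) ^ 2 * z.2 ^ 3)

/-- The Euclidean length `|∇F_{m,α}(x,y)|` of the gradient. -/
noncomputable def normGradF (m : ℕ) (α : ℝ) (z : EuclideanSpace ℝ (Fin m) × ℝ) : ℝ :=
  Real.sqrt (‖(gradF m α z).1‖ ^ 2 + (gradF m α z).2 ^ 2)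

/-- The vector field `ξ(x,y) = −y^α · ∇F_{m,α}(x,y)/|∇F_{m,α}(x,y)|`. -/
noncomputable def xiField (m : ℕ) (α : ℝ) (z : EuclideanSpace ℝ (Fin m) × ℝ) :
    EuclideanSpace ℝ (Fin m) × ℝ :=
  (-(z.2 ^ α) / normGradF m α z) • gradF m α z

/-- The divergence of `ξ`, i.e. the sum of the `m+1` partial derivatives of its components. -/
noncomputable def divXi (m : ℕ) (α : ℝ) (z : EuclideanSpace ℝ (Fin m) × ℝ) : ℝ :=
  (∑ i : Fin m, (fderiv ℝ (xiField m α) z (EuclideanSpace.single i 1, 0)).1 i) +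
    (fderiv ℝ (xiField m α) z (0, 1)).2

noncomputable def Sfun (m : ℕ) (α : ℝ) (z : EuclideanSpace ℝ (Fin m) × ℝ) : ℝ :=
  α ^ 4 * (‖z.1‖ ^ 2) ^ 3 + ((m : ℝ) - 1) ^ 4 * z.2 ^ 6

lemma normGradF_eq (m : ℕ) (α : ℝ) (z : EuclideanSpace ℝ (Fin m) × ℝ) :
    normGradF m α z = Real.sqrt (Sfun m α z) := by
  unfold normGradF gradF Sfun
  congr 1
  rw [norm_smul, mul_pow, Real.norm_eq_abs, sq_abs]
  ring

lemma xiField_eq (m : ℕ) (α : ℝ) :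
    xiField m α = fun z =>
      (((-(α ^ 2) * (z.2 ^ α * ‖z.1‖ ^ 2)) * (Real.sqrt (Sfun m α z))⁻¹) • z.1,
        (((m : ℝ) - 1) ^ 2 * (z.2 ^ α * z.2 ^ 3)) * (Real.sqrt (Sfun m α z))⁻¹) := by
  funext z
  unfold xiField gradF
  rw [normGradF_eq]
  refine Prod.ext ?_ ?_
  · show (-(z.2 ^ α) / Real.sqrt (Sfun m α z)) • ((α ^ 2 * ‖z.1‖ ^ 2) • z.1) = _
    rw [smul_smul]; congr 1; field_simp
  · show (-(z.2 ^ α) / Real.sqrt (Sfun m α z)) * (-((m : ℝ) - 1) ^ 2 * z.2 ^ 3) = _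
    field_simp

set_option maxHeartbeats 1000000 in
/-- For `m ≥ 2`, `α > 0`, `x ≠ 0` and `y > 0`, the divergence of
`ξ(x,y) = −y^α ∇F_{m,α}/|∇F_{m,α}|` equals
`−|∇F|⁻³ (m−1) α y^α ((m−1)⁴y⁶ − 3(m−1)²αy⁴|x|² − 3(m−1)α²y²|x|⁴ + α⁴|x|⁶)(α|x|² − (m−1)y²)`. -/
theorem divergence_xi (m : ℕ) (hm : 2 ≤ m) (α : ℝ) (hα : 0 < α)
    (x : EuclideanSpace ℝ (Fin m)) (y : ℝ) (hx : x ≠ 0) (hy : 0 < y) :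
    divXi m α (x, y) =
      -((normGradF m α (x, y))⁻¹ ^ 3) * ((m : ℝ) - 1) * α * y ^ α *
        (((m : ℝ) - 1) ^ 4 * y ^ 6 - 3 * ((m : ℝ) - 1) ^ 2 * α * y ^ 4 * ‖x‖ ^ 2
          - 3 * ((m : ℝ) - 1) * α ^ 2 * y ^ 2 * ‖x‖ ^ 4 + α ^ 4 * ‖x‖ ^ 6) *
        (α * ‖x‖ ^ 2 - ((m : ℝ) - 1) * y ^ 2) := by
  have hy' : y ≠ 0 := hy.ne'
  have hx0 : (0:ℝ) < ‖x‖ := norm_pos_iff.mpr hx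
  set k : ℝ := (m : ℝ) - 1 with hk
  have hS0 : 0 < Sfun m α (x, y) := by
    unfold Sfun
    positivity
  have hss : 0 < Real.sqrt (Sfun m α (x, y)) := Real.sqrt_pos.mpr hS0
  -- basic derivatives
  have hfst : HasFDerivAt (fun z : EuclideanSpace ℝ (Fin m) × ℝ => z.1) (ContinuousLinearMap.fst ℝ (EuclideanSpace ℝ (Fin m)) ℝ) (x, y) :=
    hasFDerivAt_fst
  have hsnd : HasFDerivAt (fun z : EuclideanSpace ℝ (Fin m) × ℝ => z.2) (ContinuousLinearMap.snd ℝ (EuclideanSpace ℝ (Fin m)) ℝ) (x, y) :=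
    hasFDerivAt_snd
  have hR : HasFDerivAt (fun z : EuclideanSpace ℝ (Fin m) × ℝ => ‖z.1‖ ^ 2)
      (2 • (innerSL ℝ x).comp (ContinuousLinearMap.fst ℝ (EuclideanSpace ℝ (Fin m)) ℝ)) (x, y) := hfst.norm_sq
  have hp3 : HasDerivAt (fun t : ℝ => t ^ 3) (3 * (‖x‖ ^ 2) ^ 2) (‖x‖ ^ 2) := by
    simpa using hasDerivAt_pow 3 (‖x‖ ^ 2)
  have hp6 : HasDerivAt (fun t : ℝ => t ^ 6) (6 * y ^ 5) y := by
    simpa using hasDerivAt_pow 6 y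
  have hp3y : HasDerivAt (fun t : ℝ => t ^ 3) (3 * y ^ 2) y := by
    simpa using hasDerivAt_pow 3 y
  have hS : HasFDerivAt (Sfun m α) _ (x, y) :=
    ((hp3.comp_hasFDerivAt (x, y) hR).const_mul (α ^ 4)).add
      ((hp6.comp_hasFDerivAt (x, y) hsnd).const_mul (k ^ 4))
  have hsqrt : HasFDerivAt (fun z => Real.sqrt (Sfun m α z)) _ (x, y) := hS.sqrt hS0.ne'
  have hinv : HasFDerivAt (fun z => (Real.sqrt (Sfun m α z))⁻¹) _ (x, y) :=
    (hasDerivAt_inv hss.ne').comp_hasFDerivAt (x, y) hsqrt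
  have hrpow : HasFDerivAt (fun z : EuclideanSpace ℝ (Fin m) × ℝ => z.2 ^ α) _ (x, y) :=
    ((Real.hasDerivAt_rpow_const (x := y) (p := α) (Or.inl hy')).comp_hasFDerivAt (x, y) hsnd :
      HasFDerivAt ((fun t : ℝ => t ^ α) ∘ fun z : EuclideanSpace ℝ (Fin m) × ℝ => z.2) _ (x, y))
  have hfS : HasFDerivAt
      (fun z : EuclideanSpace ℝ (Fin m) × ℝ => (-(α ^ 2) * (z.2 ^ α * ‖z.1‖ ^ 2)) * (Real.sqrt (Sfun m α z))⁻¹)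
      _ (x, y) := ((hrpow.mul hR).const_mul (-(α ^ 2))).mul hinv
  have hgS : HasFDerivAt
      (fun z : EuclideanSpace ℝ (Fin m) × ℝ => (k ^ 2 * (z.2 ^ α * z.2 ^ 3)) * (Real.sqrt (Sfun m α z))⁻¹)
      _ (x, y) := ((hrpow.mul (hp3y.comp_hasFDerivAt (x, y) hsnd)).const_mul (k ^ 2)).mul hinv
  have hXi := (hfS.smul hfst).prodMk hgS
  replace hXi := HasFDerivAt.congr_of_eventuallyEq hXi
    (Filter.Eventually.of_forall (fun z => congrFun (xiField_eq m α) z))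
  unfold divXi
  rw [hXi.fderiv]
  simp only [ContinuousLinearMap.prod_apply, ContinuousLinearMap.add_apply,
    ContinuousLinearMap.smul_apply, ContinuousLinearMap.comp_apply,
    ContinuousLinearMap.smulRight_apply, ContinuousLinearMap.coe_fst',
    ContinuousLinearMap.coe_snd', innerSL_apply_apply, smul_eq_mul, nsmul_eq_mul,
    Function.comp, inner_zero_right, EuclideanSpace.inner_single_right, conj_trivial,
    mul_zero, mul_one, zero_mul, add_zero, zero_add, Nat.cast_ofNat,
    PiLp.add_apply, PiLp.smul_apply, EuclideanSpace.single_apply]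
  simp only [if_pos]
  simp only [Pi.mul_apply, Function.comp_apply]
  clear hXi
  rw [normGradF_eq]
  set s : ℝ := Real.sqrt (Sfun m α (x, y)) with hsdef
  have hs2 : s ^ 2 = α ^ 4 * (‖x‖ ^ 2) ^ 3 + k ^ 4 * y ^ 6 := by
    rw [hsdef, Real.sq_sqrt hS0.le]; rfl
  have hsum : ∑ i : Fin m, x i * x i = ‖x‖ ^ 2 := by
    rw [EuclideanSpace.norm_eq, Real.sq_sqrt (Finset.sum_nonneg (fun i _ => by positivity))]
    simp [Real.norm_eq_abs, sq_abs, sq]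
  have hrew : ∀ i : Fin m,
      (-α ^ 2 * (y ^ α * ‖x‖ ^ 2) * s⁻¹ * 1 +
        (-α ^ 2 * (y ^ α * ‖x‖ ^ 2) *
              (-(s ^ 2)⁻¹ *
                (1 / (2 * s) * (α ^ 4 * (3 * (‖x‖ ^ 2) ^ 2 * (2 * (1 * x i)))))) +
            s⁻¹ * (-α ^ 2 * (y ^ α * (2 * (1 * x i))))) *
          x i) =
      (-α ^ 2 * (y ^ α * ‖x‖ ^ 2) * s⁻¹) +
        (-α ^ 2 * (y ^ α * ‖x‖ ^ 2) * (-(s ^ 2)⁻¹ * (1 / (2 * s) * (α ^ 4 * (3 * (‖x‖ ^ 2) ^ 2 * 2)))) +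
          s⁻¹ * (-α ^ 2 * (y ^ α * 2))) * (x i * x i) := by
    intro i; ring
  rw [Finset.sum_congr rfl (fun i _ => hrew i), Finset.sum_add_distrib, Finset.sum_const,
    ← Finset.mul_sum, hsum, Finset.card_univ, Fintype.card_fin, nsmul_eq_mul]
  have hmk : (m : ℝ) = k + 1 := by simp [hk]
  have hym : y ^ (α - 1) = y ^ α / y := by
    rw [Real.rpow_sub hy, Real.rpow_one]
  rw [hmk, hym]
  field_simp
  linear_combination (2 *
    (k ^ 2 * y ^ 2 * (3 + α) - α ^ 2 * ‖x‖ ^ 2 * (3 + k))) * hs2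
end

section
/- Let m ≥ 2 be an integer and let α ≥ (2·m^{3/2} + 3m − 1)/(m−1)^2 be a real number. Then for every point (x,y) ∈ ℝ^m × ℝ with x ≠ 0 and y > 0, the vector field ξ(x,y) = −y^α·∇F_{m,α}(x,y)/|∇F_{m,α}(x,y)| satisfies F_{m,α}(x,y)·div ξ(x,y) ≤ 0, where div ξ is the sum of the m+1 partial derivatives of the components of ξ. -/
set_option maxHeartbeats 1600000

/-- The function `F_{m,α}(x,y) = (1/4)(α²|x|⁴ − (m−1)² y⁴)`. -/
noncomputable def Ffun (m : ℕ) (α : ℝ) (z : EuclideanSpace ℝ (Fin m) × ℝ) : ℝ :=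
  (1 / 4) * (α ^ 2 * ‖z.1‖ ^ 4 - ((m : ℝ) - 1) ^ 2 * z.2 ^ 4)

lemma keyineq (q α r y : ℝ) (hq1 : 1 < q) (hr : 0 < r) (hy : 0 < y) (hα0 : 0 < α)
    (hαk : 2*q^3 + 3*q^2 - 1 ≤ (q^2-1)^2 * α) :
    (α^2*r^4 - (q^2-1)^2*y^4) *
      (3*α^6*r^8 - (q^2+2)*α^2*r^2*(α^4*(r^2)^3 + ((q^2-1)^2)^2*y^6)
        + (3+α)*(q^2-1)^2*y^2*(α^4*(r^2)^3 + ((q^2-1)^2)^2*y^6)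
        - 3*((q^2-1)^2)^3*y^8) ≤ 0 := by
  set c : ℝ := q^2 - 1 with hc
  have hc0 : 0 < c := by nlinarith
  set u : ℝ := α*r^2 with hu
  set v : ℝ := c*y^2 with hv
  have hu0 : 0 < u := mul_pos hα0 (by positivity)
  have hv0 : 0 < v := mul_pos hc0 (by positivity)
  have hP : 0 ≤ α*u^3 - 3*u^2*v - 3*u*v^2 + c*v^3 := by
    have ht1 : 0 ≤ (c*v - (1+q)*u)^2 * (c*v + (2*q-1)*u) :=
      mul_nonneg (sq_nonneg _) (by nlinarith)
    have ht2 : 0 ≤ (c^2*α - (2*q^3+3*q^2-1)) * u^3 :=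
      mul_nonneg (by linarith) (by positivity)
    have hid : c^2*(α*u^3 - 3*u^2*v - 3*u*v^2 + c*v^3)
        = (c*v - (1+q)*u)^2 * (c*v + (2*q-1)*u) + (c^2*α - (2*q^3+3*q^2-1))*u^3 := by
      simp only [hc]; ring
    nlinarith [ht1, ht2, hid, mul_pos hc0 hc0]
  have hid2 : (α^2*r^4 - (q^2-1)^2*y^4) *
      (3*α^6*r^8 - (q^2+2)*α^2*r^2*(α^4*(r^2)^3 + ((q^2-1)^2)^2*y^6)
        + (3+α)*(q^2-1)^2*y^2*(α^4*(r^2)^3 + ((q^2-1)^2)^2*y^6)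
        - 3*((q^2-1)^2)^3*y^8)
      = -(α*c*(u-v)^2*(u+v)*(α*u^3 - 3*u^2*v - 3*u*v^2 + c*v^3)) := by
    simp only [hu, hv, hc]; ring
  rw [hid2]
  have h3 : 0 ≤ α*c*(u-v)^2*(u+v)*(α*u^3 - 3*u^2*v - 3*u*v^2 + c*v^3) :=
    mul_nonneg (mul_nonneg (mul_nonneg (mul_nonneg hα0.le hc0.le) (sq_nonneg _))
      (add_pos hu0 hv0).le) hP
  linarith


/-- For `m ≥ 2` and `α ≥ (2 m^{3/2} + 3m − 1)/(m−1)²`, the vector field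
`ξ = −y^α ∇F_{m,α}/|∇F_{m,α}|` satisfies `F_{m,α} · div ξ ≤ 0` at every point with
`x ≠ 0` and `y > 0`. -/
theorem F_mul_div_xi_nonpos (m : ℕ) (hm : 2 ≤ m) (α : ℝ)
    (hα : α ≥ (2 * (m : ℝ) ^ ((3 : ℝ) / 2) + 3 * (m : ℝ) - 1) / ((m : ℝ) - 1) ^ 2)
    (x : EuclideanSpace ℝ (Fin m)) (y : ℝ) (hx : x ≠ 0) (hy : 0 < y) :
    Ffun m α (x, y) * divXi m α (x, y) ≤ 0 := by
  have hm2 : (2:ℝ) ≤ (m:ℝ) := by exact_mod_cast hm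
  have hc0 : (0:ℝ) < (m:ℝ) - 1 := by linarith
  set q : ℝ := Real.sqrt (m:ℝ) with hqdef
  have hq0 : 0 ≤ q := Real.sqrt_nonneg _
  have hq2 : q ^ 2 = (m:ℝ) := Real.sq_sqrt (by positivity)
  have hq1 : 1 < q := by nlinarith
  have hm32 : (m:ℝ) ^ ((3:ℝ)/2) = q ^ 3 := by
    have h1 : (m:ℝ) ^ ((3:ℝ)/2) = ((m:ℝ) ^ ((1:ℝ)/2)) ^ (3:ℕ) := by
      rw [← Real.rpow_natCast ((m:ℝ) ^ ((1:ℝ)/2)) 3, ← Real.rpow_mul (by positivity)]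
      norm_num
    rw [h1, hqdef, Real.sqrt_eq_rpow]
  have hα0 : 0 < α := by
    have h2 : 0 < (2 * (m : ℝ) ^ ((3 : ℝ) / 2) + 3 * (m : ℝ) - 1) / ((m : ℝ) - 1) ^ 2 := by
      apply div_pos
      · rw [hm32]; nlinarith
      · positivity
    linarith [hα]
  have hαk : 2*q^3 + 3*q^2 - 1 ≤ (q^2-1)^2 * α := by
    have h2 : (2 * (m : ℝ) ^ ((3 : ℝ) / 2) + 3 * (m : ℝ) - 1) ≤ α * ((m:ℝ) - 1) ^ 2 :=
      (div_le_iff₀ (by positivity)).mp hα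
    rw [hm32, ← hq2] at h2
    nlinarith [h2]
  set k : ℝ := ((m:ℝ)-1)^2 with hkdef
  have hr : 0 < ‖x‖ := norm_pos_iff.mpr hx
  have hD₀pos : 0 < α ^ 4 * (‖x‖ ^ 2) ^ 3 + k ^ 2 * y ^ 6 := by positivity
  set D₀ : ℝ := α ^ 4 * (‖x‖ ^ 2) ^ 3 + k ^ 2 * y ^ 6 with hD₀
  set n₀ : ℝ := Real.sqrt D₀ with hn₀
  have hn₀pos : 0 < n₀ := Real.sqrt_pos.mpr hD₀pos
  set z₀ : EuclideanSpace ℝ (Fin m) × ℝ := (x, y) with hz₀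
  have hnorm : HasFDerivAt (fun z : EuclideanSpace ℝ (Fin m) × ℝ => ‖z.1‖ ^ 2)
      (2 • (innerSL ℝ x).comp (ContinuousLinearMap.fst ℝ (EuclideanSpace ℝ (Fin m)) ℝ)) z₀ :=
    (hasFDerivAt_fst (p := z₀)).norm_sq
  have hsnd : HasFDerivAt (fun z : EuclideanSpace ℝ (Fin m) × ℝ => z.2)
      (ContinuousLinearMap.snd ℝ (EuclideanSpace ℝ (Fin m)) ℝ) z₀ := hasFDerivAt_snd
  have hD : HasFDerivAt (fun z : EuclideanSpace ℝ (Fin m) × ℝ =>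
        α ^ 4 * (‖z.1‖ ^ 2) ^ 3 + k ^ 2 * z.2 ^ 6)
      (α ^ 4 • ((3 * (‖x‖ ^ 2) ^ 2) • (2 • (innerSL ℝ x).comp
          (ContinuousLinearMap.fst ℝ (EuclideanSpace ℝ (Fin m)) ℝ)))
        + k ^ 2 • ((6 * y ^ 5) •
          (ContinuousLinearMap.snd ℝ (EuclideanSpace ℝ (Fin m)) ℝ))) z₀ := by
    have h1 := (hasDerivAt_pow 3 (‖(z₀ : EuclideanSpace ℝ (Fin m) × ℝ).1‖ ^ 2)).comp_hasFDerivAt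
      z₀ hnorm
    have h2 := (hasDerivAt_pow 6 (z₀ : EuclideanSpace ℝ (Fin m) × ℝ).2).comp_hasFDerivAt z₀ hsnd
    have h1' : HasFDerivAt (fun z : EuclideanSpace ℝ (Fin m) × ℝ => (‖z.1‖ ^ 2) ^ 3)
        ((3 * (‖x‖ ^ 2) ^ 2) • (2 • (innerSL ℝ x).comp
          (ContinuousLinearMap.fst ℝ (EuclideanSpace ℝ (Fin m)) ℝ))) z₀ := by simpa [Function.comp_def, hz₀] using h1
    have h2' : HasFDerivAt (fun z : EuclideanSpace ℝ (Fin m) × ℝ => z.2 ^ 6)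
        ((6 * y ^ 5) • (ContinuousLinearMap.snd ℝ (EuclideanSpace ℝ (Fin m)) ℝ)) z₀ := by
      simpa [Function.comp_def, hz₀] using h2
    exact (h1'.const_smul (α ^ 4)).add (h2'.const_smul (k ^ 2))
  have hn := hD.sqrt (x := z₀) (by exact hD₀pos.ne')
  have hninv := (hasDerivAt_inv (x := Real.sqrt
      (α ^ 4 * (‖(z₀ : EuclideanSpace ℝ (Fin m) × ℝ).1‖ ^ 2) ^ 3 + k ^ 2 * z₀.2 ^ 6))
      (by exact hn₀pos.ne')).comp_hasFDerivAt z₀ hn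
  have hu : HasFDerivAt (fun z : EuclideanSpace ℝ (Fin m) × ℝ => -(z.2 ^ α))
      (-((α * y ^ (α - 1)) • (ContinuousLinearMap.snd ℝ (EuclideanSpace ℝ (Fin m)) ℝ))) z₀ :=
    (hsnd.rpow_const (Or.inl hy.ne')).neg
  have hc := hu.mul hninv
  have hg1 : HasFDerivAt (fun z : EuclideanSpace ℝ (Fin m) × ℝ => (α ^ 2 * ‖z.1‖ ^ 2) • z.1)
      ((α ^ 2 * ‖x‖ ^ 2) • (ContinuousLinearMap.fst ℝ (EuclideanSpace ℝ (Fin m)) ℝ)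
        + ((α ^ 2) • (2 • (innerSL ℝ x).comp
            (ContinuousLinearMap.fst ℝ (EuclideanSpace ℝ (Fin m)) ℝ))).smulRight x) z₀ :=
    (hnorm.const_smul (α ^ 2)).smul (hasFDerivAt_fst (p := z₀))
  have hg2 : HasFDerivAt (fun z : EuclideanSpace ℝ (Fin m) × ℝ => -k * z.2 ^ 3)
      (-((k * (3 * y ^ 2)) •
        (ContinuousLinearMap.snd ℝ (EuclideanSpace ℝ (Fin m)) ℝ))) z₀ := by
    have := ((hasDerivAt_pow 3 (z₀ : EuclideanSpace ℝ (Fin m) × ℝ).2).comp_hasFDerivAt z₀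
      hsnd).const_mul (-k)
    simpa [smul_smul, neg_mul] using this
  have hg := hg1.prodMk hg2
  have hxi0 := hc.smul hg
  have hfe : xiField m α = fun z : EuclideanSpace ℝ (Fin m) × ℝ =>
      (-(z.2 ^ α) * (Real.sqrt (α ^ 4 * (‖z.1‖ ^ 2) ^ 3 + k ^ 2 * z.2 ^ 6))⁻¹) •
        ((α ^ 2 * ‖z.1‖ ^ 2) • z.1, -k * z.2 ^ 3) := by
    funext z
    have hnn : normGradF m α z = Real.sqrt (α ^ 4 * (‖z.1‖ ^ 2) ^ 3 + k ^ 2 * z.2 ^ 6) := by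
      show Real.sqrt (‖(α ^ 2 * ‖z.1‖ ^ 2) • z.1‖ ^ 2 + (-((m:ℝ)-1) ^ 2 * z.2 ^ 3) ^ 2) = _
      congr 1
      rw [norm_smul, Real.norm_eq_abs, abs_of_nonneg (by positivity)]
      ring
    show (-(z.2 ^ α) / normGradF m α z) • gradF m α z = _
    rw [hnn, div_eq_mul_inv]
    rfl
  have hfd : fderiv ℝ (xiField m α) z₀ =
      (-(y ^ α) * n₀⁻¹) •
        (((α ^ 2 * ‖x‖ ^ 2) • ContinuousLinearMap.fst ℝ (EuclideanSpace ℝ (Fin m)) ℝ +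
          ((α ^ 2) • (2 • (innerSL ℝ x).comp
            (ContinuousLinearMap.fst ℝ (EuclideanSpace ℝ (Fin m)) ℝ))).smulRight x).prod
          (-((k * (3 * y ^ 2)) • ContinuousLinearMap.snd ℝ (EuclideanSpace ℝ (Fin m)) ℝ)))
      + ((-(y ^ α)) • ((-(n₀ ^ 2)⁻¹) • ((1 / (2 * n₀)) •
            (α ^ 4 • ((3 * (‖x‖ ^ 2) ^ 2) • (2 • (innerSL ℝ x).comp
              (ContinuousLinearMap.fst ℝ (EuclideanSpace ℝ (Fin m)) ℝ)))
             + k ^ 2 • ((6 * y ^ 5) •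
              (ContinuousLinearMap.snd ℝ (EuclideanSpace ℝ (Fin m)) ℝ)))))
          + n₀⁻¹ • (-((α * y ^ (α - 1)) •
              (ContinuousLinearMap.snd ℝ (EuclideanSpace ℝ (Fin m)) ℝ)))).smulRight
          ((α ^ 2 * ‖x‖ ^ 2) • x, -k * y ^ 3) := by
    rw [hfe]; exact hxi0.fderiv
  have hval1 : ∀ j : Fin m,
      (fderiv ℝ (xiField m α) z₀ (EuclideanSpace.single j 1, (0:ℝ))).1 j
      = (-(y ^ α) * n₀⁻¹) * (α ^ 2 * ‖x‖ ^ 2 + 2 * α ^ 2 * (x j) ^ 2)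
        + (y ^ α * (n₀ ^ 2)⁻¹ *
            ((1 / (2 * n₀)) * (α ^ 4 * (3 * (‖x‖ ^ 2) ^ 2) * (2 * x j))))
          * (α ^ 2 * ‖x‖ ^ 2 * x j) := by
    intro j
    rw [hfd]
    simp [ContinuousLinearMap.add_apply, ContinuousLinearMap.smul_apply,
      ContinuousLinearMap.smulRight_apply, ContinuousLinearMap.comp_apply,
      ContinuousLinearMap.coe_fst', ContinuousLinearMap.coe_snd',
      ContinuousLinearMap.prod_apply, innerSL_apply_apply, real_inner_comm x,
      EuclideanSpace.inner_single_left, EuclideanSpace.inner_single_right, EuclideanSpace.single_apply,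
      PiLp.add_apply, PiLp.smul_apply, smul_eq_mul]
    ring
  have hval2 : (fderiv ℝ (xiField m α) z₀ ((0 : EuclideanSpace ℝ (Fin m)), (1:ℝ))).2
      = (-(y ^ α) * n₀⁻¹) * (-(k * (3 * y ^ 2)))
        + ((-(y ^ α)) * ((-(n₀ ^ 2)⁻¹) * ((1 / (2 * n₀)) * (k ^ 2 * (6 * y ^ 5))))
            + n₀⁻¹ * (-(α * y ^ (α - 1)))) * (-k * y ^ 3) := by
    rw [hfd]
    simp [ContinuousLinearMap.add_apply, ContinuousLinearMap.smul_apply,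
      ContinuousLinearMap.smulRight_apply, ContinuousLinearMap.comp_apply,
      ContinuousLinearMap.coe_fst', ContinuousLinearMap.coe_snd',
      ContinuousLinearMap.prod_apply, innerSL_apply_apply, smul_eq_mul]
    try ring
  have hsumsq : ‖x‖ ^ 2 = ∑ j : Fin m, (x j) ^ 2 := by
    rw [EuclideanSpace.norm_eq, Real.sq_sqrt (by positivity)]
    simp [sq_abs]
  have hsum : (∑ j : Fin m, (fderiv ℝ (xiField m α) z₀ (EuclideanSpace.single j 1, (0:ℝ))).1 j)
      = (m : ℝ) * ((-(y ^ α) * n₀⁻¹) * (α ^ 2 * ‖x‖ ^ 2))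
        + ((-(y ^ α) * n₀⁻¹) * (2 * α ^ 2)
            + y ^ α * (n₀ ^ 2)⁻¹ * ((1 / (2 * n₀)) * (α ^ 4 * (3 * (‖x‖ ^ 2) ^ 2) * 2))
              * (α ^ 2 * ‖x‖ ^ 2)) * ‖x‖ ^ 2 := by
    have h1 : (∑ j : Fin m, (fderiv ℝ (xiField m α) z₀ (EuclideanSpace.single j 1, (0:ℝ))).1 j)
        = ∑ j : Fin m, (((-(y ^ α) * n₀⁻¹) * (α ^ 2 * ‖x‖ ^ 2))
          + ((-(y ^ α) * n₀⁻¹) * (2 * α ^ 2)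
            + y ^ α * (n₀ ^ 2)⁻¹ * ((1 / (2 * n₀)) * (α ^ 4 * (3 * (‖x‖ ^ 2) ^ 2) * 2))
              * (α ^ 2 * ‖x‖ ^ 2)) * (x j) ^ 2) :=
      Finset.sum_congr rfl (fun j _ => by rw [hval1 j]; ring)
    rw [h1, Finset.sum_add_distrib, Finset.sum_const, ← Finset.mul_sum, ← hsumsq]
    simp [Finset.card_univ]
  have hdiv : divXi m α (x, y) = y ^ α *
      (3 * α ^ 6 * ‖x‖ ^ 8 - ((m:ℝ) + 2) * α ^ 2 * ‖x‖ ^ 2 * n₀ ^ 2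
        + (3 + α) * k * y ^ 2 * n₀ ^ 2 - 3 * k ^ 3 * y ^ 8) / n₀ ^ 3 := by
    show (∑ j : Fin m, (fderiv ℝ (xiField m α) z₀ (EuclideanSpace.single j 1, (0:ℝ))).1 j)
        + (fderiv ℝ (xiField m α) z₀ ((0 : EuclideanSpace ℝ (Fin m)), (1:ℝ))).2 = _
    rw [hsum, hval2, Real.rpow_sub_one hy.ne' α]
    field_simp
    ring
  have hyα : 0 < y ^ α := Real.rpow_pos_of_pos hy α
  have hn2 : n₀ ^ 2 = α ^ 4 * (‖x‖ ^ 2) ^ 3 + k ^ 2 * y ^ 6 := Real.sq_sqrt hD₀pos.le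
  have hkey := keyineq q α ‖x‖ y hq1 hr hy hα0 hαk
  have hF : Ffun m α (x, y) = (1/4) * (α ^ 2 * ‖x‖ ^ 4 - k * y ^ 4) := rfl
  have hfinal : Ffun m α (x, y) * divXi m α (x, y)
      = (y ^ α / (4 * n₀ ^ 3)) * ((α^2*‖x‖^4 - (q^2-1)^2*y^4) *
        (3*α^6*‖x‖^8 - (q^2+2)*α^2*‖x‖^2*(α^4*(‖x‖^2)^3 + ((q^2-1)^2)^2*y^6)
          + (3+α)*(q^2-1)^2*y^2*(α^4*(‖x‖^2)^3 + ((q^2-1)^2)^2*y^6)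
          - 3*((q^2-1)^2)^3*y^8)) := by
    rw [hF, hdiv, hn2, hkdef, ← hq2]
    ring
  show Ffun m α (x, y) * divXi m α (x, y) ≤ 0
  rw [hfinal]
  exact mul_nonpos_iff.mpr (Or.inl ⟨le_of_lt (div_pos hyα (by positivity)), hkey⟩)
end
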